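/- Let q ≥ 2, M > m ≥ 1, and 0 ≤ i < q^M with l_M(i) = m. Then the minimal prefix satisfies ī_M = q^{M−m} · (part(i, M−m))‾_m. -/

import Mathlib

/-- `pt q n s = ⌊n / q^s⌋` (the "part"). -/
def pt (q n s : ℕ) : ℕ := n / q ^ s

/-- `rs q n s = n mod q^s` (the "residue"). -/
def rs (q n s : ℕ) : ℕ := n % q ^ s

/-- `lm q m n = min { j | 1 ≤ j ≤ m and part(n,j) ≥ res(n, m-j) }`. -/
noncomputable def lm (q m n : ℕ) : ℕ :=
  sInf {j : ℕ | 1 ≤ j ∧ j ≤ m ∧ rs q n (m - j) ≤ pt q n j}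

/-- The minimal prefix `n̄_m = n - res(n, m - l_m(n))`. -/
noncomputable def mp (q m n : ℕ) : ℕ := n - rs q n (m - lm q m n)

lemma lm_mem {q m n l : ℕ} (h : lm q m n = l) (hl : 1 ≤ l) :
    1 ≤ l ∧ l ≤ m ∧ rs q n (m - l) ≤ pt q n l := by
  have hne : {j : ℕ | 1 ≤ j ∧ j ≤ m ∧ rs q n (m - j) ≤ pt q n j}.Nonempty := by
    by_contra hemp
    rw [Set.not_nonempty_iff_eq_empty] at hemp
    rw [lm, hemp, Nat.sInf_empty] at h
    omega
  have hmem := Nat.sInf_mem hne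
  rw [lm] at h
  rw [h] at hmem
  exact hmem

lemma lm_not_mem {q m n l j : ℕ} (h : lm q m n = l) (h1 : 1 ≤ j) (h2 : j ≤ m)
    (hj : j < l) : ¬ rs q n (m - j) ≤ pt q n j := by
  intro hc
  have : lm q m n ≤ j := Nat.sInf_le ⟨h1, h2, hc⟩
  omega

lemma lm_eq {q m n l : ℕ} (h1 : 1 ≤ l) (h2 : l ≤ m)
    (hmem : rs q n (m - l) ≤ pt q n l)
    (hnot : ∀ j, 1 ≤ j → j < l → ¬ rs q n (m - j) ≤ pt q n j) :
    lm q m n = l := by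
  have hle : lm q m n ≤ l := Nat.sInf_le ⟨h1, h2, hmem⟩
  have hne : ({j : ℕ | 1 ≤ j ∧ j ≤ m ∧ rs q n (m - j) ≤ pt q n j}).Nonempty :=
    ⟨l, h1, h2, hmem⟩
  obtain ⟨ha, hb, hc⟩ := Nat.sInf_mem hne
  by_contra hcon
  exact hnot _ ha (lt_of_le_of_ne hle hcon) hc

/-- The descent lemma: under the period condition and `d < e`, success at `t`
descends to success at `t - j`. -/
lemma descent {q u m' j e t : ℕ} (hq : 1 ≤ q) (he : e < q)
    (hj : 1 ≤ j) (hjt : j + 1 ≤ t) (htm : t ≤ m')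
    (hper : u % q ^ (m' - j) = u / q ^ j)
    (hd : u / q ^ (j - 1) % q < e)
    (hF : (u % q ^ (m' - t)) * q + e ≤ u / q ^ (t - 1)) :
    (u % q ^ (m' - (t - j))) * q + e ≤ u / q ^ (t - j - 1) := by
  have hq0 : 0 < q := hq
  set C := u % q ^ (m' - t) with hC
  set d := u / q ^ (j - 1) % q with hdd
  set β := u / q ^ (t - 1) with hβ
  have hαβ : C * q + d + 1 ≤ β := by omega
  -- Fact 2 : u % q ^ (m' - (t-j)) = C * q^j + u % q^j
  have e1 : m' - (t - j) = j + (m' - t) := by omega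
  have fact2 : u % q ^ (m' - (t - j)) = (u % q ^ j) + q ^ j * C := by
    rw [e1, pow_add, Nat.mod_mul]
    congr 1
    congr 1
    rw [← hper, Nat.mod_mod_of_dvd u (pow_dvd_pow q (by omega))]
  -- decompose u % q^j
  have e2 : q ^ j = q ^ (j - 1) * q := by
    rw [← pow_succ]
    congr 1
    omega
  have fact3 : u % q ^ j = u % q ^ (j - 1) + q ^ (j - 1) * d := by
    rw [e2, Nat.mod_mul]
  -- bound : (u % q^(j-1)) * q + e < q^j
  have hb1 : u % q ^ (j - 1) < q ^ (j - 1) := Nat.mod_lt _ (by positivity)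
  have hb2 : (u % q ^ (j - 1)) * q + e < q ^ j := by
    calc (u % q ^ (j - 1)) * q + e < (u % q ^ (j - 1)) * q + q := by omega
    _ = (u % q ^ (j - 1) + 1) * q := by ring
    _ ≤ q ^ (j - 1) * q := Nat.mul_le_mul_right q (by omega)
    _ = q ^ j := e2.symm
  -- LHS rewrite
  have lhs_eq : (u % q ^ (m' - (t - j))) * q + e
      = (C * q + d) * q ^ j + ((u % q ^ (j - 1)) * q + e) := by
    rw [fact2, fact3, e2]
    ring
  -- RHS bound
  have rhs_ge : β * q ^ j ≤ u / q ^ (t - j - 1) := by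
    have e3 : u / q ^ (t - j - 1) / q ^ j = β := by
      rw [Nat.div_div_eq_div_mul, ← pow_add, hβ]
      congr 2
      omega
    calc β * q ^ j = (u / q ^ (t - j - 1) / q ^ j) * q ^ j := by rw [e3]
    _ ≤ u / q ^ (t - j - 1) := Nat.div_mul_le_self _ _
  calc (u % q ^ (m' - (t - j))) * q + e
      = (C * q + d) * q ^ j + ((u % q ^ (j - 1)) * q + e) := lhs_eq
    _ ≤ (C * q + d) * q ^ j + q ^ j := by omega
    _ = (C * q + d + 1) * q ^ j := by ring
    _ ≤ β * q ^ j := Nat.mul_le_mul_right _ hαβ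
    _ ≤ u / q ^ (t - j - 1) := rhs_ge

lemma descend_all {q u m' j e : ℕ} (hq : 1 ≤ q) (he : e < q) (hj : 1 ≤ j)
    (hper : u % q ^ (m' - j) = u / q ^ j)
    (hd : u / q ^ (j - 1) % q < e) :
    ∀ t, 1 ≤ t → t ≤ m' → (u % q ^ (m' - t)) * q + e ≤ u / q ^ (t - 1) →
    ∃ t', 1 ≤ t' ∧ t' ≤ j ∧ t' ≤ t ∧ (u % q ^ (m' - t')) * q + e ≤ u / q ^ (t' - 1) := by
  intro t
  induction t using Nat.strong_induction_on with
  | _ t ih =>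
    intro h1 h2 hF
    by_cases hc : t ≤ j
    · exact ⟨t, h1, hc, le_refl t, hF⟩
    · have hstep := descent hq he hj (by omega) h2 hper hd hF
      obtain ⟨t', a, b, c, dd⟩ := ih (t - j) (by omega) (by omega) (by omega) hstep
      exact ⟨t', a, b, by omega, dd⟩

/-- Single digit-removal step: if `lm q M i = l < M` then `lm q (M-1) (i/q) = l`. -/
lemma lm_step {q M i l : ℕ} (hq : 2 ≤ q) (hl : 1 ≤ l) (hlM : l < M)
    (h : lm q M i = l) : lm q (M - 1) (i / q) = l := by
  have hq0 : 0 < q := by omega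
  set u := i / q with hu
  set e := i % q with heq
  have he : e < q := Nat.mod_lt _ hq0
  -- translation identities
  have T1 : ∀ s : ℕ, 1 ≤ s → i / q ^ s = u / q ^ (s - 1) := by
    intro s hs
    rw [hu, Nat.div_div_eq_div_mul, ← pow_succ']
    congr 2
    omega
  have T2 : ∀ a : ℕ, u % q ^ a = i % q ^ (a + 1) / q := by
    intro a
    rw [hu, ← Nat.mod_mul_right_div_self, ← pow_succ']
  have T3 : ∀ s : ℕ, 1 ≤ s → i % q ^ s = (u % q ^ (s - 1)) * q + e := by
    intro s hs
    have h2 : q ^ s = q * q ^ (s - 1) := by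
      rw [← pow_succ']
      congr 1
      omega
    rw [h2, Nat.mod_mul, hu, heq]
    ring
  -- membership of l for i
  obtain ⟨-, hlM', hsucc0⟩ := lm_mem h hl
  have hsucc : i % q ^ (M - l) ≤ i / q ^ l := hsucc0
  -- success at l for u
  have hsucc' : rs q u ((M - 1) - l) ≤ pt q u l := by
    show u % q ^ ((M - 1) - l) ≤ u / q ^ l
    have e1 : (M - 1) - l + 1 = M - l := by omega
    have e2 : u / q ^ l = i / q ^ l / q := by
      rw [hu, Nat.div_div_eq_div_mul, Nat.div_div_eq_div_mul, mul_comm]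
    rw [T2, e1, e2]
    exact Nat.div_le_div_right hsucc
  apply lm_eq hl (by omega) hsucc'
  -- non-membership for j < l
  intro j hj1 hjl hcon0
  have hcon : u % q ^ ((M - 1) - j) ≤ u / q ^ j := hcon0
  set P := u / q ^ j with hP
  set A := i % q ^ (M - j) with hA
  have hAq : A / q = u % q ^ ((M - 1) - j) := by
    have e4 : (M - 1) - j + 1 = M - j := by omega
    rw [hA, T2, e4]
  have hAdivq : A / q ≤ P := by rw [hAq]; exact hcon
  -- failure at j for i
  have hfail0 : ¬ rs q i (M - j) ≤ pt q i j := lm_not_mem h hj1 (by omega) hjl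
  have hfail : i / q ^ j < A := by
    rw [hA]
    exact lt_of_not_ge hfail0
  set dj := i / q ^ j % q with hdj
  have hup : i / q ^ j / q = P := by
    rw [hP, hu, Nat.div_div_eq_div_mul, Nat.div_div_eq_div_mul, mul_comm]
  have hPd : i / q ^ j = q * P + dj := by
    have h3 := Nat.div_add_mod (i / q ^ j) q
    rw [hup] at h3
    omega
  have hAgt : q * P + dj < A := by rw [← hPd]; exact hfail
  have hge : P ≤ A / q := by
    apply (Nat.le_div_iff_mul_le hq0).mpr
    rw [mul_comm]
    omega
  have hAP : A / q = P := le_antisymm hAdivq hge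
  have hAe : A % q = e := by
    rw [hA, heq]
    exact Nat.mod_mod_of_dvd i (dvd_pow_self q (by omega))
  have hAeq : A = q * P + e := by
    have h3 := Nat.div_add_mod A q
    rw [hAP, hAe] at h3
    exact h3.symm
  have hde : dj < e := by omega
  -- period condition on u
  have hper : u % q ^ ((M - 1) - j) = u / q ^ j := by rw [← hAq, hAP]
  -- dj = u / q^(j-1) % q
  have hd : u / q ^ (j - 1) % q < e := by
    rw [← T1 j hj1]
    exact hde
  -- success at l for i in F-form
  have hFl : (u % q ^ ((M - 1) - l)) * q + e ≤ u / q ^ (l - 1) := by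
    have h4 := hsucc
    rw [T3 (M - l) (by omega), T1 l hl] at h4
    have e2 : M - l - 1 = (M - 1) - l := by omega
    rw [e2] at h4
    exact h4
  obtain ⟨t', ht1, ht2, ht3, htF⟩ :=
    descend_all hq0 he hj1 hper hd l hl (by omega) hFl
  -- translate back : success at t' for i
  have hsucct' : rs q i (M - t') ≤ pt q i t' := by
    show i % q ^ (M - t') ≤ i / q ^ t'
    rw [T3 (M - t') (by omega), T1 t' ht1]
    have e3 : M - t' - 1 = (M - 1) - t' := by omega
    rw [e3]
    exact htF
  exact lm_not_mem h ht1 (by omega) (by omega) hsucct'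

lemma lm_reduce {q m : ℕ} (hq : 2 ≤ q) (hm : 1 ≤ m) :
    ∀ k i, lm q (m + k) i = m → lm q m (i / q ^ k) = m := by
  intro k
  induction k with
  | zero => intro i h; simpa using h
  | succ k ih =>
    intro i h
    have h1 : lm q (m + k) (i / q) = m := by
      have := lm_step hq hm (by omega) h
      have e1 : m + (k + 1) - 1 = m + k := by omega
      rwa [e1] at this
    have h2 := ih (i / q) h1
    rw [Nat.div_div_eq_div_mul] at h2
    have e2 : q * q ^ k = q ^ (k + 1) := (pow_succ' q k).symm
    rwa [e2] at h2

theorem mp_down (q m M : ℕ) (hq : 2 ≤ q) (hm : 1 ≤ m) (hmM : m < M)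
    (i : ℕ) (hi : i < q ^ M) (hl : lm q M i = m) :
    mp q M i = q ^ (M - m) * mp q m (pt q i (M - m)) := by
  have hred : lm q m (pt q i (M - m)) = m := by
    have h0 : lm q (m + (M - m)) i = m := by
      rwa [Nat.add_sub_cancel' (le_of_lt hmM)]
    exact lm_reduce hq hm (M - m) i h0
  have hn : mp q m (pt q i (M - m)) = pt q i (M - m) := by
    rw [mp, hred]
    simp [rs, Nat.mod_one]
  rw [hn, mp, hl]
  unfold rs pt
  have h1 := Nat.mod_add_div i (q ^ (M - m))
  omega
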